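/- In the R_right Lag system with n ≥ 5, starting from the string (s₁,blank)...(s_{n-3},blank)(s_{n-2},d)(s_{n-1},t)(sₙ,blank), after n(n−1) additional iterations the memory string is (s₁,blank)...(s_{n-4},blank)(s_{n-3},d)(s_{n-2},blank)(s_{n-1},t)(sₙ,blank); i.e., one full cycle shifts the pulsed-hold token d exactly one position counterclockwise while t stays fixed. -/
import Mathlib


namespace Stmt8

/-- Control symbols for the clockwise-rotation construction. -/
inductive Ctl | blank | p | t | w | R | d | g | z | v | r
deriving DecidableEq

/-- The rule set `R_right` on control coordinates: `R_t` together with the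
rules for the pulsed-hold token `d`, the interaction tokens `g`, `z`,
the victory pulse `v`, and the begin/end tokens `R`, `r`. -/
def rc : Ctl → Ctl → Option Ctl
  | .blank, .blank => some .blank
  | .blank, .p => some .p
  | .p, .blank => some .blank
  | .blank, .t => some .p
  | .blank, .w => some .blank
  | .t, .blank => some .w
  | .w, .blank => some .w
  | .w, .p => some .t
  | .p, .w => some .blank
  | .blank, .R => some .d
  | .blank, .d => some .blank
  | .blank, .g => some .z
  | .blank, .z => some .p
  | .blank, .v => some .v
  | .blank, .r => some .blank
  | .R, .blank => some .t
  | .w, .d => some .v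
  | .w, .z => some .w
  | .p, .d => some .blank
  | .d, .blank => some .d
  | .d, .t => some .g
  | .d, .p => some .g
  | .d, .v => some .r
  | .g, .blank => some .blank
  | .g, .w => some .blank
  | .z, .blank => some .d
  | .v, .blank => some .blank
  | .v, .d => some .blank
  | _, _ => none

/-- One Lag iteration with context length 2: match the control symbols of the
first two pairs, delete the first pair, append a pair with the first pair's
data symbol and the rule's output control symbol. -/
def step {α : Type*} (r : Ctl → Ctl → Option Ctl) :
    List (α × Ctl) → Option (List (α × Ctl))
  | (x, a) :: (y, b) :: rest => (r a b).map fun c => (y, b) :: rest ++ [(x, c)]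
  | _ => none

/-- `k` iterations of the Lag system. -/
def iterL {α : Type*} (r : Ctl → Ctl → Option Ctl) :
    ℕ → List (α × Ctl) → Option (List (α × Ctl))
  | 0, s => some s
  | k + 1, s => (step r s).bind (iterL r k)

end Stmt8


namespace Aux
open Stmt8

/-- `Outs cs b os`: processing the controls `cs`, where the control following
the block `cs` is `b`, produces output controls `os`. -/
def Outs : List Ctl → Ctl → List Ctl → Prop
  | [], _, os => os = []
  | a :: l, b, os => ∃ c os', rc a (l.headD b) = some c ∧ os = c :: os' ∧ Outs l b os'

theorem Outs.length : ∀ {cs : List Ctl} {b os}, Outs cs b os → os.length = cs.length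
  | [], _, os, h => by simp [Outs] at h; simp [h]
  | a :: l, b, os, h => by
    obtain ⟨c, os', _, rfl, h'⟩ := h
    simp [h'.length]

theorem Outs_nil {b : Ctl} : Outs [] b [] := rfl

theorem Outs_cons {a : Ctl} {l b c os} (h1 : rc a (l.headD b) = some c)
    (h2 : Outs l b os) : Outs (a :: l) b (c :: os) := ⟨c, os, h1, rfl, h2⟩

theorem iterL_add {α : Type*} (r) (a b : ℕ) (s : List (α × Ctl)) :
    iterL r (a + b) s = (iterL r a s).bind (iterL r b) := by
  induction a generalizing s with
  | zero => simp [iterL]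
  | succ a ih =>
    have : a + 1 + b = (a + b) + 1 := by omega
    rw [this, iterL, iterL]
    cases step r s with
    | none => simp
    | some t => simp [ih]

theorem run_prefix {α : Type*} :
    ∀ (cs : List Ctl) (xs : List α) (b : Ctl) (y : α)
      (rest : List (α × Ctl)) (os : List Ctl),
      Outs cs b os → xs.length = cs.length →
      iterL rc cs.length (xs.zip cs ++ (y, b) :: rest) =
        some ((y, b) :: rest ++ xs.zip os)
  | [], xs, b, y, rest, os, h, hl => by
    have hxs : xs = [] := List.length_eq_zero_iff.mp (by simpa using hl)
    have hos : os = [] := h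
    subst hxs; subst hos; simp [iterL]
  | a :: cs, xs, b, y, rest, os, h, hl => by
    obtain ⟨c, os', hrc, rfl, h'⟩ := h
    obtain ⟨x, xs', rfl⟩ : ∃ x xs', xs = x :: xs' := by
      cases xs with
      | nil => simp at hl
      | cons x xs' => exact ⟨x, xs', rfl⟩
    have hl' : xs'.length = cs.length := by simpa using hl
    cases cs with
    | nil =>
      have hxs' : xs' = [] := List.length_eq_zero_iff.mp (by simpa using hl')
      subst hxs'
      have hos' : os' = [] := h'
      subst hos'
      simp only [List.headD] at hrc
      simp [iterL, step, hrc]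
    | cons a' cs' =>
      obtain ⟨x', xs'', rfl⟩ : ∃ z zs, xs' = z :: zs := by
        cases xs' with
        | nil => simp at hl'
        | cons z zs => exact ⟨z, zs, rfl⟩
      simp only [List.headD] at hrc
      have := run_prefix (a' :: cs') (x' :: xs'') b y (rest ++ [(x, c)]) os' h' hl'
      calc iterL rc (a :: a' :: cs').length
            ((x :: x' :: xs'').zip (a :: a' :: cs') ++ (y, b) :: rest)
          = iterL rc (a' :: cs').length
            ((x' :: xs'').zip (a' :: cs') ++ (y, b) :: (rest ++ [(x, c)])) := by
            simp only [List.length_cons, iterL, List.zip_cons_cons, List.cons_append,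
              step, hrc, Option.map_some, Option.bind_some]
            congr 1
            simp
      _ = some ((y, b) :: (rest ++ [(x, c)]) ++ (x' :: xs'').zip os') := this
      _ = some ((y, b) :: rest ++ (x :: x' :: xs'').zip (c :: os')) := by simp

end Aux

namespace Aux
open Stmt8

/-- One full round of `cs.length + 1` steps on a cyclic string. -/
theorem round' {α : Type*} (cs : List Ctl) (b : Ctl) (xs : List α)
    (os : List Ctl) (cl : Ctl)
    (h : Outs cs b os) (hl : xs.length = cs.length + 1)
    (hcl : rc b (os.headD .blank) = some cl) (hne : cs ≠ []) :
    iterL rc (cs.length + 1) (xs.zip (cs ++ [b])) =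
      some (xs.zip (os ++ [cl])) := by
  obtain ⟨xs', x, rfl⟩ : ∃ ys y, xs = ys ++ [y] := by
    rcases List.eq_nil_or_concat xs with h0 | h0
    · subst h0; simp at hl
    · obtain ⟨L, y, rfl⟩ := h0
      exact ⟨L, y, by simp⟩
  have hl' : xs'.length = cs.length := by simpa using hl
  have hzip : (xs' ++ [x]).zip (cs ++ [b]) = xs'.zip cs ++ [(x, b)] := by
    rw [List.zip_append hl']; rfl
  rw [hzip]
  have hadd : cs.length + 1 = cs.length + 1 := rfl
  rw [iterL_add rc cs.length 1]
  rw [run_prefix cs xs' b x [] os h hl']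
  obtain ⟨c0, os', rfl⟩ : ∃ c0 os', os = c0 :: os' := by
    cases os with
    | nil => have := h.length; cases cs with
      | nil => exact absurd rfl hne
      | cons a l => simp at this
    | cons c0 os' => exact ⟨c0, os', rfl⟩
  obtain ⟨x0, xs'', rfl⟩ : ∃ z zs, xs' = z :: zs := by
    cases xs' with
    | nil => cases cs with
      | nil => exact absurd rfl hne
      | cons a l => simp at hl'
    | cons z zs => exact ⟨z, zs, rfl⟩
  simp only [List.headD] at hcl
  simp only [List.nil_append, List.zip_cons_cons, iterL, step, hcl,
    Option.map_some, Option.bind_some]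
  have hlen2 : xs''.length = os'.length := by
    have := h.length; simp at this hl'; omega
  simp [List.zip_append hlen2, hcl]

end Aux

namespace Aux
open Stmt8

theorem headD_rep (m : ℕ) (a : Ctl) (t : List Ctl) (b : Ctl) :
    (List.replicate m Ctl.blank ++ a :: t).headD b =
      if m = 0 then a else .blank := by
  cases m <;> simp [List.replicate_succ]

/-- A run of blanks in front of a nonempty block passes through unchanged. -/
theorem Outs_rep {t : List Ctl} {b : Ctl} {os : List Ctl} (m : ℕ)
    (h : Outs (.blank :: t) b os) :
    Outs (List.replicate m .blank ++ .blank :: t) b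
      (List.replicate m .blank ++ os) := by
  induction m with
  | zero => simpa using h
  | succ m ih =>
    simp only [List.replicate_succ, List.cons_append]
    refine Outs_cons ?_ ih
    cases m <;> simp [List.replicate_succ, rc]

/-- The tail block `d blank w` with trailing context `blank`, possibly preceded
by blanks, reproduces itself. -/
theorem Outs_dbw (q : ℕ) :
    Outs (List.replicate q .blank ++ [.d, .blank, .w]) .blank
      (List.replicate q .blank ++ [.d, .blank, .w]) := by
  induction q with
  | zero =>
    refine Outs_cons (by simp [rc]) (Outs_cons (by simp [rc]) (Outs_cons (by simp [rc]) Outs_nil))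
  | succ q ih =>
    simp only [List.replicate_succ, List.cons_append]
    refine Outs_cons ?_ ih
    cases q <;> simp [List.replicate_succ, rc]

/-- Same but with trailing context `p`: the `w` becomes `t`. -/
theorem Outs_dbw_p (q : ℕ) :
    Outs (List.replicate q .blank ++ [.d, .blank, .w]) .p
      (List.replicate q .blank ++ [.d, .blank, .t]) := by
  induction q with
  | zero =>
    refine Outs_cons (by simp [rc]) (Outs_cons (by simp [rc]) (Outs_cons (by simp [rc]) Outs_nil))
  | succ q ih =>
    simp only [List.replicate_succ, List.cons_append]
    refine Outs_cons ?_ ih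
    cases q <;> simp [List.replicate_succ, rc]

end Aux

namespace Aux
open Stmt8

theorem rep_snoc (m : ℕ) (a : Ctl) (l : List Ctl) :
    List.replicate m a ++ a :: l = List.replicate (m + 1) a ++ l := by
  rw [List.replicate_succ', List.append_assoc]; rfl

/-- Round `b^(m+2) d t b → b^(m+2) g w b`. -/
theorem roundR0 {α : Type*} (m : ℕ) (xs : List α) (hl : xs.length = m + 5) :
    iterL rc (m + 5)
      (xs.zip (List.replicate (m+2) .blank ++ [.d, .t, .blank])) =
      some (xs.zip (List.replicate (m+2) .blank ++ [.g, .w, .blank])) := by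
  have houts : Outs (List.replicate (m+1) .blank ++ .blank :: [.d, .t]) .blank
      (List.replicate (m+1) .blank ++ [.blank, .g, .w]) :=
    Outs_rep (m+1) (Outs_cons (by simp [rc]) (Outs_cons (by simp [rc])
      (Outs_cons (by simp [rc]) Outs_nil)))
  have h := round' _ .blank xs _ .blank houts
    (by simp [hl]; try omega)
    (by rw [List.replicate_succ]; simp [rc]) (by simp)
  simp only [List.length_append, List.length_replicate, List.length_cons,
    List.length_nil] at h
  simpa only [List.append_assoc, List.cons_append, List.nil_append,
    List.singleton_append, rep_snoc, Nat.add_assoc, Nat.reduceAdd] using h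

end Aux

namespace Aux
open Stmt8

theorem cons_rep (a : Ctl) (q : ℕ) (l : List Ctl) :
    a :: (List.replicate q a ++ l) = List.replicate (q + 1) a ++ l := by
  simp [List.replicate_succ]

/-- Round `b^(m+2) g w b → b^(m+1) z b w b`. -/
theorem roundR1 {α : Type*} (m : ℕ) (xs : List α) (hl : xs.length = m + 5) :
    iterL rc (m + 5)
      (xs.zip (List.replicate (m+2) .blank ++ [.g, .w, .blank])) =
      some (xs.zip (List.replicate (m+1) .blank ++ [.z, .blank, .w, .blank])) := by
  have houts : Outs (List.replicate (m+1) .blank ++ .blank :: [.g, .w]) .blank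
      (List.replicate (m+1) .blank ++ [.z, .blank, .w]) :=
    Outs_rep (m+1) (Outs_cons (by simp [rc]) (Outs_cons (by simp [rc])
      (Outs_cons (by simp [rc]) Outs_nil)))
  have h := round' _ .blank xs _ .blank houts
    (by simp [hl]; try omega)
    (by rw [List.replicate_succ]; simp [rc]) (by simp)
  simp only [List.length_append, List.length_replicate, List.length_cons,
    List.length_nil] at h
  simpa only [List.append_assoc, List.cons_append, List.nil_append,
    List.singleton_append, rep_snoc, cons_rep, Nat.add_assoc, Nat.reduceAdd] using h

/-- Round `b^(m+2) z b w b → b^(m+1) p d b w b` (for `n ≥ 6`). -/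
theorem roundR2 {α : Type*} (m : ℕ) (xs : List α) (hl : xs.length = m + 6) :
    iterL rc (m + 6)
      (xs.zip (List.replicate (m+2) .blank ++ [.z, .blank, .w, .blank])) =
      some (xs.zip (List.replicate (m+1) .blank ++
        [.p, .d, .blank, .w, .blank])) := by
  have houts : Outs (List.replicate (m+1) .blank ++ .blank :: [.z, .blank, .w]) .blank
      (List.replicate (m+1) .blank ++ [.p, .d, .blank, .w]) :=
    Outs_rep (m+1) (Outs_cons (by simp [rc]) (Outs_cons (by simp [rc])
      (Outs_cons (by simp [rc]) (Outs_cons (by simp [rc]) Outs_nil))))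
  have h := round' _ .blank xs _ .blank houts
    (by simp [hl]; try omega)
    (by rw [List.replicate_succ]; simp [rc]) (by simp)
  simp only [List.length_append, List.length_replicate, List.length_cons,
    List.length_nil] at h
  simpa only [List.append_assoc, List.cons_append, List.nil_append,
    List.singleton_append, rep_snoc, cons_rep, Nat.add_assoc, Nat.reduceAdd] using h

/-- Round `b^(m+2) p b^q d b w b → b^(m+1) p b^(q+1) d b w b`. -/
theorem roundU2 {α : Type*} (m q : ℕ) (xs : List α) (hl : xs.length = m + q + 7) :
    iterL rc (m + q + 7)
      (xs.zip (List.replicate (m+2) .blank ++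
        .p :: (List.replicate q .blank ++ [.d, .blank, .w, .blank]))) =
      some (xs.zip (List.replicate (m+1) .blank ++
        .p :: (List.replicate (q+1) .blank ++ [.d, .blank, .w, .blank]))) := by
  have houts : Outs
      (List.replicate (m+1) .blank ++ .blank ::
        (.p :: (List.replicate q .blank ++ [.d, .blank, .w]))) .blank
      (List.replicate (m+1) .blank ++
        .p :: .blank :: (List.replicate q .blank ++ [.d, .blank, .w])) :=
    Outs_rep (m+1) (Outs_cons (by simp [rc]) (Outs_cons
      (by cases q <;> simp [List.replicate_succ, rc]) (Outs_dbw q)))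
  have h := round' _ .blank xs _ .blank houts
    (by simp [hl]; try omega)
    (by rw [List.replicate_succ]; simp [rc]) (by simp)
  simp only [List.length_append, List.length_replicate, List.length_cons,
    List.length_nil] at h
  simp only [List.append_assoc, List.cons_append, List.nil_append,
    List.singleton_append, rep_snoc, cons_rep, Nat.add_assoc, Nat.reduceAdd] at h
  convert h using 2 <;> omega

/-- Round `b p b^q d b w b → p b^(q+1) d b w p`. -/
theorem roundU1 {α : Type*} (q : ℕ) (xs : List α) (hl : xs.length = q + 6) :
    iterL rc (q + 6)
      (xs.zip (.blank ::
        .p :: (List.replicate q .blank ++ [.d, .blank, .w, .blank]))) =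
      some (xs.zip (.p ::
        (List.replicate (q+1) .blank ++ [.d, .blank, .w, .p]))) := by
  have houts : Outs
      (.blank :: .p :: (List.replicate q .blank ++ [.d, .blank, .w])) .blank
      (.p :: .blank :: (List.replicate q .blank ++ [.d, .blank, .w])) :=
    Outs_cons (by simp [rc]) (Outs_cons
      (by cases q <;> simp [List.replicate_succ, rc]) (Outs_dbw q))
  have h := round' _ .blank xs _ .p houts
    (by simp [hl]; try omega)
    (by simp [rc]) (by simp)
  simp only [List.length_append, List.length_replicate, List.length_cons,
    List.length_nil] at h
  simp only [List.append_assoc, List.cons_append, List.nil_append,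
    List.singleton_append, rep_snoc, cons_rep, Nat.add_assoc, Nat.reduceAdd] at h
  convert h using 2 <;> omega

/-- Round `p b^(q+1) d b w p → b^(q+2) d b t b`. -/
theorem roundV {α : Type*} (q : ℕ) (xs : List α) (hl : xs.length = q + 6) :
    iterL rc (q + 6)
      (xs.zip (.p :: (List.replicate (q+1) .blank ++ [.d, .blank, .w, .p]))) =
      some (xs.zip (List.replicate (q+2) .blank ++ [.d, .blank, .t, .blank])) := by
  have houts : Outs
      (.p :: (List.replicate (q+1) .blank ++ [.d, .blank, .w])) .p
      (.blank :: (List.replicate (q+1) .blank ++ [.d, .blank, .t])) :=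
    Outs_cons (by rw [List.replicate_succ]; simp [rc]) (Outs_dbw_p (q+1))
  have h := round' _ .p xs _ .blank houts
    (by simp [hl]; try omega)
    (by simp [rc]) (by simp)
  simp only [List.length_append, List.length_replicate, List.length_cons,
    List.length_nil] at h
  simp only [List.append_assoc, List.cons_append, List.nil_append,
    List.singleton_append, rep_snoc, cons_rep, Nat.add_assoc, Nat.reduceAdd] at h
  convert h using 2 <;> omega

end Aux

namespace Aux
open Stmt8

theorem comp {α : Type*} {a b : ℕ} {s t u : List (α × Ctl)}
    (h1 : iterL rc a s = some t) (h2 : iterL rc b t = some u) :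
    iterL rc (a + b) s = some u := by
  rw [iterL_add, h1]; exact h2

/-- `k` rounds move the `p` pulse `k` positions to the left. -/
theorem roundsU {α : Type*} : ∀ (k q : ℕ) (xs : List α), xs.length = k + q + 6 →
    iterL rc (k * (k + q + 6))
      (xs.zip (List.replicate (k+1) .blank ++
        .p :: (List.replicate q .blank ++ [.d, .blank, .w, .blank]))) =
    some (xs.zip (List.replicate 1 .blank ++
      .p :: (List.replicate (k+q) .blank ++ [.d, .blank, .w, .blank])))
  | 0, q, xs, hl => by simp [iterL]
  | k+1, q, xs, hl => by
    have h1 := roundU2 k q xs (by omega)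
    have h2 := roundsU k (q+1) xs (by omega)
    have h := comp h1 h2
    rw [show k+(q+1) = k+1+q by omega] at h2
    have h' := comp h1 h2
    convert h' using 2
    ring

theorem ofFn_zip {α : Type*} {n : ℕ} (s : Fin n → α) (c : Fin n → Ctl) :
    (List.ofFn fun i => (s i, c i)) = (List.ofFn s).zip (List.ofFn c) := by
  apply List.ext_getElem <;> simp

theorem ofFn_ctl_init (k : ℕ) :
    (List.ofFn fun i : Fin (k+6) =>
      if i.val = k+3 then Ctl.d else if i.val = k+4 then Ctl.t else Ctl.blank) =
    List.replicate (k+3) .blank ++ [.d, .t, .blank] := by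
  apply List.ext_getElem
  · simp
  · intro i h1 h2
    simp only [List.getElem_ofFn]
    by_cases hi : i < k + 3
    · rw [List.getElem_append_left (by simpa using hi)]
      rw [List.getElem_replicate, if_neg (by omega), if_neg (by omega)]
    · have : i = k+3 ∨ i = k+4 ∨ i = k+5 := by simp at h1; omega
      rw [List.getElem_append_right (by simp; omega)]
      rcases this with h | h | h <;> subst h <;>
        simp [List.length_replicate, Nat.add_sub_cancel_left]

theorem ofFn_ctl_final (k : ℕ) :
    (List.ofFn fun i : Fin (k+6) =>
      if i.val = k+2 then Ctl.d else if i.val = k+4 then Ctl.t else Ctl.blank) =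
    List.replicate (k+2) .blank ++ [.d, .blank, .t, .blank] := by
  apply List.ext_getElem
  · simp
  · intro i h1 h2
    simp only [List.getElem_ofFn]
    by_cases hi : i < k + 2
    · rw [List.getElem_append_left (by simpa using hi)]
      rw [List.getElem_replicate, if_neg (by omega), if_neg (by omega)]
    · have : i = k+2 ∨ i = k+3 ∨ i = k+4 ∨ i = k+5 := by simp at h1; omega
      rw [List.getElem_append_right (by simp; omega)]
      rcases this with h | h | h | h <;> subst h <;>
        simp [List.length_replicate, Nat.add_sub_cancel_left]

end Aux

namespace Aux
open Stmt8

theorem main5 {α : Type*} (s : Fin 5 → α) :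
    iterL rc 20
      (List.ofFn fun i : Fin 5 =>
        (s i, if i.val = 2 then Ctl.d
              else if i.val = 3 then Ctl.t else Ctl.blank)) =
    some (List.ofFn fun i : Fin 5 =>
      (s i, if i.val = 1 then Ctl.d
            else if i.val = 3 then Ctl.t else Ctl.blank)) := by
  rfl

theorem main6 {α : Type*} (k : ℕ) (s : Fin (k+6) → α) :
    iterL rc ((k+6) * (k+6-1))
      (List.ofFn fun i : Fin (k+6) =>
        (s i, if i.val = k+6-3 then Ctl.d
              else if i.val = k+6-2 then Ctl.t else Ctl.blank)) =
    some (List.ofFn fun i : Fin (k+6) =>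
      (s i, if i.val = k+6-4 then Ctl.d
            else if i.val = k+6-2 then Ctl.t else Ctl.blank)) := by
  have e3 : k+6-3 = k+3 := by omega
  have e2 : k+6-2 = k+4 := by omega
  have e4 : k+6-4 = k+2 := by omega
  simp only [e3, e2, e4]
  rw [ofFn_zip, ofFn_zip, ofFn_ctl_init k, ofFn_ctl_final k]
  set xs := List.ofFn s with hxs
  have hlen : xs.length = k + 6 := by simp [hxs]
  have h0 := roundR0 (k+1) xs (by omega)
  have h1 := roundR1 (k+1) xs (by omega)
  have h2 := roundR2 k xs (by omega)
  have h3 := roundsU k 0 xs (by omega)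
  have h4 := roundU1 k xs (by omega)
  have h5 := roundV k xs (by omega)
  have H := comp h0 (comp h1 (comp h2 (comp h3 (comp h4 h5))))
  have e : (k+6) * (k+6-1) =
      (k+1)+5 + ((k+1)+5 + (k+6 + (k*(k+0+6) + (k+6 + (k+6))))) := by
    rw [show k+6-1 = k+5 by omega]; ring
  rw [e]
  exact H

end Aux


open Stmt8 in
/-- Starting from `(s₁,blank)...(s_{n-3},blank)(s_{n-2},d)(s_{n-1},t)(sₙ,blank)`
with `n ≥ 5`, after `n(n−1)` additional iterations the memory string is
`(s₁,blank)...(s_{n-4},blank)(s_{n-3},d)(s_{n-2},blank)(s_{n-1},t)(sₙ,blank)`: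
one full cycle shifts the pulsed-hold token `d` exactly one position
counterclockwise while `t` stays fixed. -/
theorem stmt8 {α : Type*} (n : ℕ) (hn : 5 ≤ n) (s : Fin n → α) :
    iterL rc (n * (n - 1))
      (List.ofFn fun i : Fin n =>
        (s i, if i.val = n - 3 then Ctl.d
              else if i.val = n - 2 then Ctl.t else Ctl.blank)) =
    some (List.ofFn fun i : Fin n =>
      (s i, if i.val = n - 4 then Ctl.d
            else if i.val = n - 2 then Ctl.t else Ctl.blank)) := by
  obtain ⟨m, rfl⟩ : ∃ m, n = m + 5 := ⟨n - 5, by omega⟩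
  cases m with
  | zero => exact Aux.main5 s
  | succ k => exact Aux.main6 k s
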